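/- Let p = 1, α ∈ (0,1), and I = [t₀,t₁] or [t₀,∞). For every f ∈ L^1(I;ℝ), the Riemann–Liouville fractional integral J^α f satisfies the weak-type estimate sup_{r>0} r^{1/(1-α)} μ{t ∈ I : |J^α f(t)| > r} ≤ ( (2/(α^{1-α} Γ(α))) ‖f‖_{L^1(I)} )^{1/(1-α)}. -/

import Mathlib

open MeasureTheory
open scoped ENNReal

/-- Riemann–Liouville fractional integral of order `α` at `t₀`. -/
noncomputable def RL (α t₀ : ℝ) (f : ℝ → ℝ) (t : ℝ) : ℝ :=
  (1 / Real.Gamma α) * ∫ s in t₀..t, (t - s) ^ (α - 1) * f s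

theorem stmt5 (α t₀ t₁ : ℝ) (hα : 0 < α) (hα1 : α < 1) (ht : t₀ < t₁)
    (I : Set ℝ) (hI : I = Set.Ioc t₀ t₁ ∨ I = Set.Ici t₀)
    (f : ℝ → ℝ) (hf : IntegrableOn f I) (r : ℝ) (hr : 0 < r) :
    ENNReal.ofReal (r ^ (1 / (1 - α))) * volume {t ∈ I | r < |RL α t₀ f t|} ≤
      ENNReal.ofReal
        (((2 / (α ^ (1 - α) * Real.Gamma α)) * ∫ t in I, |f t|) ^ (1 / (1 - α))) := by
  have hΓ : 0 < Real.Gamma α := Real.Gamma_pos_of_pos hα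
  have h1α : 0 < 1 - α := by linarith
  set N : ℝ := ∫ t in I, |f t| with hNdef
  have habs : IntegrableOn (fun t => |f t|) I := hf.abs
  have hmemI : ∀ t ∈ I, t₀ ≤ t ∧ Set.Ioc t₀ t ⊆ I := by
    intro t htI
    rcases hI with h | h <;> subst h
    · exact ⟨htI.1.le, fun s hs => ⟨hs.1, le_trans hs.2 htI.2⟩⟩
    · exact ⟨htI, fun s hs => le_of_lt hs.1⟩
  have hImeas : MeasurableSet I := by
    rcases hI with h | h <;> subst h
    · exact measurableSet_Ioc
    · exact measurableSet_Ici
  rcases eq_or_lt_of_le (integral_nonneg (fun t => abs_nonneg (f t)) : (0:ℝ) ≤ N) with hN | hN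
  · -- Case `∫ |f| = 0` : the superlevel set is empty
    have hfae : f =ᵐ[volume.restrict I] 0 := by
      have h0 : (fun t => |f t|) =ᵐ[volume.restrict I] 0 :=
        (integral_eq_zero_iff_of_nonneg (fun x => abs_nonneg (f x)) habs).mp hN.symm
      filter_upwards [h0] with x hx
      simpa [abs_eq_zero] using hx
    have hS : {t ∈ I | r < |RL α t₀ f t|} = ∅ := by
      ext t
      simp only [Set.mem_sep_iff, Set.mem_empty_iff_false, iff_false, not_and]
      intro htI hrt
      obtain ⟨ht0t, hsub⟩ := hmemI t htI
      have h0 : RL α t₀ f t = 0 := by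
        unfold RL
        rw [intervalIntegral.integral_of_le ht0t]
        have hz : ∀ᵐ s ∂(volume.restrict (Set.Ioc t₀ t)), (t - s) ^ (α - 1) * f s = 0 := by
          filter_upwards [ae_restrict_of_ae_restrict_of_subset hsub hfae] with s hs
          simp [hs]
        rw [integral_eq_zero_of_ae hz, mul_zero]
      rw [h0] at hrt
      simp only [abs_zero] at hrt
      linarith
    rw [hS]
    simp
  · -- Main case `0 < ∫ |f|`
    set p : ℝ := 1 / (1 - α) with hpdef
    have hp0 : 0 < p := by positivity
    set X : ℝ := 2 * N / (r * Real.Gamma α) with hXdef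
    have hX0 : 0 < X := by positivity
    set δ : ℝ := X ^ p with hδdef
    have hδ0 : 0 < δ := Real.rpow_pos_of_pos hX0 p
    have hpm : p * (α - 1) = -1 := by
      rw [hpdef]; field_simp; ring
    have hδ1 : δ ^ (α - 1) = X⁻¹ := by
      rw [hδdef, ← Real.rpow_mul hX0.le, hpm, Real.rpow_neg_one]
    have htail : δ ^ (α - 1) * N = Real.Gamma α * r / 2 := by
      rw [hδ1, hXdef, inv_div]
      field_simp
      ring
      exact mul_inv_cancel₀ hN.ne'
    -- measurable representative of f
    obtain ⟨g, hgm, hfg⟩ : ∃ g, Measurable g ∧ f =ᵐ[volume.restrict I] g :=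
      ⟨hf.1.mk f, hf.1.stronglyMeasurable_mk.measurable, hf.1.ae_eq_mk⟩
    have hgabs : (fun t => |f t|) =ᵐ[volume.restrict I] fun t => |g t| := by
      filter_upwards [hfg] with x hx; rw [hx]
    set G : ℝ → ℝ≥0∞ := fun t =>
      ∫⁻ s in Set.Ioc (max t₀ (t - δ)) t, ENNReal.ofReal ((t - s) ^ (α - 1) * |g s|) with hGdef
    have hGmeas : Measurable G := by
      rw [hGdef]
      have h : (fun t => ∫⁻ s in Set.Ioc (max t₀ (t - δ)) t,
          ENNReal.ofReal ((t - s) ^ (α - 1) * |g s|))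
          = fun t => ∫⁻ s, ({q : ℝ × ℝ | max t₀ (q.1 - δ) < q.2 ∧ q.2 ≤ q.1}.indicator
            (fun q => ENNReal.ofReal ((q.1 - q.2) ^ (α - 1) * |g q.2|)) (t, s)) := by
        funext t
        rw [← lintegral_indicator measurableSet_Ioc]
        refine lintegral_congr fun s => ?_
        by_cases h : s ∈ Set.Ioc (max t₀ (t - δ)) t
        · rw [Set.indicator_of_mem h, Set.indicator_of_mem (by exact ⟨h.1, h.2⟩)]
        · rw [Set.indicator_of_notMem h, Set.indicator_of_notMem (fun hc => h ⟨hc.1, hc.2⟩)]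
      rw [h]
      apply Measurable.lintegral_prod_right'
      apply Measurable.indicator
      · exact ENNReal.measurable_ofReal.comp
          (((measurable_fst.sub measurable_snd).pow measurable_const).mul
            ((hgm.comp measurable_snd).abs))
      · exact MeasurableSet.inter
          (measurableSet_lt (measurable_const.max (measurable_fst.sub measurable_const))
            measurable_snd)
          (measurableSet_le measurable_snd measurable_fst)
    set S : Set ℝ := {t ∈ I | r < |RL α t₀ f t|} with hSdef
    -- pointwise lower bound for `G` on `S`
    have hpt : ∀ t ∈ S, ENNReal.ofReal (Real.Gamma α * r / 2) ≤ G t := by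
      rintro t ⟨htI, hrt⟩
      obtain ⟨ht0t, hsub⟩ := hmemI t htI
      set m : ℝ := max t₀ (t - δ) with hmdef
      have hm1 : t₀ ≤ m := le_max_left _ _
      have hm2 : m ≤ t := max_le ht0t (by linarith)
      have h_ii : IntervalIntegrable (fun s => (t - s) ^ (α - 1) * f s) volume t₀ t := by
        by_contra hcon
        unfold RL at hrt
        rw [intervalIntegral.integral_undef hcon, mul_zero, abs_zero] at hrt
        linarith
      have hA : IntegrableOn (fun s => (t - s) ^ (α - 1) * f s) (Set.Ioc t₀ t) :=
        (intervalIntegrable_iff_integrableOn_Ioc_of_le ht0t).mp h_ii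
      have hAabs : IntegrableOn (fun s => |(t - s) ^ (α - 1) * f s|) (Set.Ioc t₀ t) := hA.abs
      have chain0 : r < (1 / Real.Gamma α) * ∫ s in Set.Ioc t₀ t, |(t - s) ^ (α - 1) * f s| := by
        calc r < |RL α t₀ f t| := hrt
          _ ≤ (1 / Real.Gamma α) * ∫ s in t₀..t, |(t - s) ^ (α - 1) * f s| := by
              unfold RL
              rw [abs_mul, abs_of_pos (by positivity : (0:ℝ) < 1 / Real.Gamma α)]
              exact mul_le_mul_of_nonneg_left
                (intervalIntegral.abs_integral_le_integral_abs ht0t) (by positivity)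
          _ = (1 / Real.Gamma α) * ∫ s in Set.Ioc t₀ t, |(t - s) ^ (α - 1) * f s| := by
              rw [intervalIntegral.integral_of_le ht0t]
      have hsplit : (∫ s in Set.Ioc t₀ t, |(t - s) ^ (α - 1) * f s|) =
          (∫ s in Set.Ioc t₀ m, |(t - s) ^ (α - 1) * f s|) +
            ∫ s in Set.Ioc m t, |(t - s) ^ (α - 1) * f s| := by
        rw [← Set.Ioc_union_Ioc_eq_Ioc hm1 hm2]
        exact setIntegral_union (Set.Ioc_disjoint_Ioc_of_le le_rfl) measurableSet_Ioc
          (hAabs.mono_set (by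
            rw [← Set.Ioc_union_Ioc_eq_Ioc hm1 hm2]; exact Set.subset_union_left))
          (hAabs.mono_set (by
            rw [← Set.Ioc_union_Ioc_eq_Ioc hm1 hm2]; exact Set.subset_union_right))
      have hsubm1 : Set.Ioc t₀ m ⊆ I := subset_trans (Set.Ioc_subset_Ioc_right hm2) hsub
      have hsubm2 : Set.Ioc m t ⊆ I := subset_trans (Set.Ioc_subset_Ioc_left hm1) hsub
      have hb1 : (∫ s in Set.Ioc t₀ m, |(t - s) ^ (α - 1) * f s|) ≤ δ ^ (α - 1) * N := by
        have step1 : (∫ s in Set.Ioc t₀ m, |(t - s) ^ (α - 1) * f s|) ≤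
            ∫ s in Set.Ioc t₀ m, δ ^ (α - 1) * |f s| := by
          apply setIntegral_mono_on
            (hAabs.mono_set (Set.Ioc_subset_Ioc_right hm2))
            ((habs.mono_set hsubm1).const_mul _) measurableSet_Ioc
          intro s hs
          have hstδ : s ≤ t - δ := by
            by_cases hcase : t - δ ≤ t₀
            · have hmeq : m = t₀ := max_eq_left hcase
              rw [hmeq] at hs
              exact absurd hs.2 (not_le.mpr hs.1)
            · have hmeq : m = t - δ := max_eq_right (le_of_not_ge hcase)
              rw [← hmeq]; exact hs.2
          have hk : (0:ℝ) ≤ (t - s) ^ (α - 1) := Real.rpow_nonneg (by linarith) _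
          rw [abs_mul, abs_of_nonneg hk]
          exact mul_le_mul_of_nonneg_right
            (Real.rpow_le_rpow_of_nonpos hδ0 (by linarith) (by linarith)) (abs_nonneg _)
        have step2 : (∫ s in Set.Ioc t₀ m, δ ^ (α - 1) * |f s|) =
            δ ^ (α - 1) * ∫ s in Set.Ioc t₀ m, |f s| := integral_const_mul _ _
        have step3 : (∫ s in Set.Ioc t₀ m, |f s|) ≤ N := by
          rw [hNdef]
          exact setIntegral_mono_set habs
            (Filter.Eventually.of_forall fun x => abs_nonneg _)
            (HasSubset.Subset.eventuallyLE hsubm1)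
        calc (∫ s in Set.Ioc t₀ m, |(t - s) ^ (α - 1) * f s|) ≤ _ := step1
          _ = _ := step2
          _ ≤ δ ^ (α - 1) * N :=
            mul_le_mul_of_nonneg_left step3 (Real.rpow_nonneg hδ0.le _)
      have hb2 : Real.Gamma α * r / 2 < ∫ s in Set.Ioc m t, |(t - s) ^ (α - 1) * f s| := by
        have h' := mul_lt_mul_of_pos_left chain0 hΓ
        rw [hsplit, ← mul_assoc, mul_one_div, div_self hΓ.ne', one_mul] at h'
        linarith
      have hae : ∀ᵐ s ∂volume.restrict (Set.Ioc m t),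
          |(t - s) ^ (α - 1) * f s| = (t - s) ^ (α - 1) * |g s| := by
        filter_upwards [ae_restrict_of_ae_restrict_of_subset hsubm2 hfg,
          ae_restrict_mem measurableSet_Ioc] with s hs hsmem
        rw [abs_mul, hs, abs_of_nonneg (Real.rpow_nonneg
          (by linarith [hsmem.2] : (0:ℝ) ≤ t - s) _)]
      have hcongr : (∫ s in Set.Ioc m t, |(t - s) ^ (α - 1) * f s|) =
          ∫ s in Set.Ioc m t, (t - s) ^ (α - 1) * |g s| := integral_congr_ae hae
      have hint2 : IntegrableOn (fun s => (t - s) ^ (α - 1) * |g s|) (Set.Ioc m t) :=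
        ((hAabs.mono_set (Set.Ioc_subset_Ioc_left hm1)).congr hae)
      have hnn : 0 ≤ᵐ[volume.restrict (Set.Ioc m t)] fun s => (t - s) ^ (α - 1) * |g s| := by
        filter_upwards [ae_restrict_mem measurableSet_Ioc] with s hsmem
        exact mul_nonneg (Real.rpow_nonneg (by linarith [hsmem.2]) _) (abs_nonneg _)
      have hGt : G t = ENNReal.ofReal (∫ s in Set.Ioc m t, (t - s) ^ (α - 1) * |g s|) :=
        (ofReal_integral_eq_lintegral_ofReal hint2 hnn).symm
      rw [hGt]
      exact ENNReal.ofReal_le_ofReal (by rw [← hcongr]; linarith)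
    -- Markov inequality
    have key1 : ENNReal.ofReal (Real.Gamma α * r / 2) * volume S ≤ ∫⁻ t in I, G t := by
      have hTmeas : MeasurableSet {t | ENNReal.ofReal (Real.Gamma α * r / 2) ≤ G t} :=
        measurableSet_le measurable_const hGmeas
      have hsubset : S ⊆ {t | ENNReal.ofReal (Real.Gamma α * r / 2) ≤ G t} ∩ I :=
        fun t htS => ⟨hpt t htS, htS.1⟩
      calc ENNReal.ofReal (Real.Gamma α * r / 2) * volume S
          ≤ ENNReal.ofReal (Real.Gamma α * r / 2) *
              volume ({t | ENNReal.ofReal (Real.Gamma α * r / 2) ≤ G t} ∩ I) :=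
            mul_le_mul_right (measure_mono hsubset) _
        _ = ENNReal.ofReal (Real.Gamma α * r / 2) *
              (volume.restrict I) {t | ENNReal.ofReal (Real.Gamma α * r / 2) ≤ G t} := by
            rw [Measure.restrict_apply hTmeas]
        _ ≤ ∫⁻ t in I, G t := mul_meas_ge_le_lintegral hGmeas _
    -- the elementary kernel integral
    have hinnerint : ∀ s : ℝ, ∫⁻ t in Set.Ioc s (s + δ), ENNReal.ofReal ((t - s) ^ (α - 1)) =
        ENNReal.ofReal (δ ^ α / α) := by
      intro s
      have hii : IntervalIntegrable (fun t => (t - s) ^ (α - 1)) volume s (s + δ) := by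
        have h := (intervalIntegral.intervalIntegrable_rpow' (show (-1:ℝ) < α - 1 by linarith) :
          IntervalIntegrable (fun x : ℝ => x ^ (α - 1)) volume 0 δ)
        simpa [add_comm] using h.comp_sub_right s
      have hio : IntegrableOn (fun t => (t - s) ^ (α - 1)) (Set.Ioc s (s + δ)) :=
        (intervalIntegrable_iff_integrableOn_Ioc_of_le (by linarith)).mp hii
      rw [← ofReal_integral_eq_lintegral_ofReal hio ?_]
      · congr 1
        rw [← intervalIntegral.integral_of_le (by linarith : s ≤ s + δ)]
        have h2 : (∫ t in s..(s + δ), (t - s) ^ (α - 1)) =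
            ∫ u in (s - s)..(s + δ - s), u ^ (α - 1) :=
          intervalIntegral.integral_comp_sub_right (fun u => u ^ (α - 1)) s
        rw [h2, show s - s = (0:ℝ) by ring, show s + δ - s = δ by ring,
          integral_rpow (Or.inl (by linarith)), show α - 1 + 1 = α by ring,
          Real.zero_rpow hα.ne']
        ring
      · filter_upwards [ae_restrict_mem measurableSet_Ioc] with u hu
        exact Real.rpow_nonneg (by linarith [hu.1]) _
    -- Fubini bound
    have key2 : (∫⁻ t in I, G t) ≤ ENNReal.ofReal (δ ^ α / α * N) := by
      set A : Set (ℝ × ℝ) := {q : ℝ × ℝ | q.1 ∈ I ∧ max t₀ (q.1 - δ) < q.2 ∧ q.2 ≤ q.1}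
        with hAdef
      have hAmeas : MeasurableSet A := by
        apply MeasurableSet.inter (measurable_fst hImeas)
        exact MeasurableSet.inter
          (measurableSet_lt (measurable_const.max (measurable_fst.sub measurable_const))
            measurable_snd)
          (measurableSet_le measurable_snd measurable_fst)
      set Ψ : ℝ × ℝ → ℝ≥0∞ :=
        A.indicator (fun q => ENNReal.ofReal ((q.1 - q.2) ^ (α - 1) * |g q.2|)) with hΨdef
      have hΨmeas : Measurable Ψ := by
        apply Measurable.indicator _ hAmeas
        exact ENNReal.measurable_ofReal.comp
          (((measurable_fst.sub measurable_snd).pow measurable_const).mul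
            ((hgm.comp measurable_snd).abs))
      have heq : (∫⁻ t in I, G t) = ∫⁻ t, ∫⁻ s, Ψ (t, s) := by
        rw [← lintegral_indicator hImeas]
        refine lintegral_congr fun t => ?_
        by_cases htI : t ∈ I
        · rw [Set.indicator_of_mem htI]
          simp only [hGdef]
          rw [← lintegral_indicator measurableSet_Ioc]
          refine lintegral_congr fun s => ?_
          by_cases hs : s ∈ Set.Ioc (max t₀ (t - δ)) t
          · rw [Set.indicator_of_mem hs, hΨdef, Set.indicator_of_mem (by exact ⟨htI, hs.1, hs.2⟩)]
          · rw [Set.indicator_of_notMem hs, hΨdef,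
              Set.indicator_of_notMem (fun hc => hs ⟨hc.2.1, hc.2.2⟩)]
        · rw [Set.indicator_of_notMem htI]
          symm
          have hz : ∀ s : ℝ, Ψ (t, s) = 0 := fun s =>
            Set.indicator_of_notMem (fun hc => htI hc.1) _
          simp [hz]
      rw [heq, lintegral_lintegral_swap (f := fun t s => Ψ (t, s)) (by exact hΨmeas.aemeasurable)]
      have hinner : ∀ s : ℝ, (∫⁻ t, Ψ (t, s)) ≤
          I.indicator (fun s' => ENNReal.ofReal |g s'| * ENNReal.ofReal (δ ^ α / α)) s := by
        intro s
        have hb : ∀ t : ℝ, Ψ (t, s) ≤ I.indicator (fun s' => ENNReal.ofReal |g s'|) s *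
            (Set.Ioc s (s + δ)).indicator (fun t' => ENNReal.ofReal ((t' - s) ^ (α - 1))) t := by
          intro t
          by_cases hts : (t, s) ∈ A
          · obtain ⟨htI, hts1, hts3⟩ := hts
            have ht0s : t₀ < s := lt_of_le_of_lt (le_max_left _ _) hts1
            have htδs : t - δ < s := lt_of_le_of_lt (le_max_right _ _) hts1
            rw [hΨdef, Set.indicator_of_mem (by exact ⟨htI, hts1, hts3⟩)]
            rcases eq_or_lt_of_le hts3 with he | hlt
            · have hts0 : (t - s) ^ (α - 1) = 0 := by
                rw [show t = s from he.symm, sub_self,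
                  Real.zero_rpow (sub_ne_zero.mpr (ne_of_lt hα1))]
              rw [hts0, zero_mul, ENNReal.ofReal_zero]
              exact zero_le
            · have hsI : s ∈ I := (hmemI t htI).2 ⟨ht0s, hts3⟩
              rw [Set.indicator_of_mem hsI,
                Set.indicator_of_mem (show t ∈ Set.Ioc s (s + δ) from ⟨hlt, by linarith⟩),
                ENNReal.ofReal_mul (Real.rpow_nonneg (by linarith) _), mul_comm]
          · rw [hΨdef, Set.indicator_of_notMem hts]
            exact zero_le
        calc (∫⁻ t, Ψ (t, s)) ≤ ∫⁻ t, I.indicator (fun s' => ENNReal.ofReal |g s'|) s *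
            (Set.Ioc s (s + δ)).indicator (fun t' => ENNReal.ofReal ((t' - s) ^ (α - 1))) t :=
              lintegral_mono hb
          _ = I.indicator (fun s' => ENNReal.ofReal |g s'|) s *
              ∫⁻ t, (Set.Ioc s (s + δ)).indicator
                (fun t' => ENNReal.ofReal ((t' - s) ^ (α - 1))) t :=
              lintegral_const_mul' _ _ (by
                by_cases h : s ∈ I <;> simp [h, ENNReal.ofReal_ne_top])
          _ = I.indicator (fun s' => ENNReal.ofReal |g s'|) s * ENNReal.ofReal (δ ^ α / α) := by
              rw [lintegral_indicator measurableSet_Ioc, hinnerint s]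
          _ = I.indicator (fun s' => ENNReal.ofReal |g s'| * ENNReal.ofReal (δ ^ α / α)) s := by
              by_cases h : s ∈ I <;> simp [h]
      have hNint : (∫⁻ s in I, ENNReal.ofReal |g s|) = ENNReal.ofReal N := by
        have hN' : N = ∫ s in I, |g s| := by rw [hNdef]; exact integral_congr_ae hgabs
        rw [hN', ofReal_integral_eq_lintegral_ofReal (habs.congr hgabs)
          (Filter.Eventually.of_forall fun x => abs_nonneg _)]
      calc (∫⁻ s, ∫⁻ t, Ψ (t, s)) ≤
          ∫⁻ s, I.indicator (fun s' => ENNReal.ofReal |g s'| * ENNReal.ofReal (δ ^ α / α)) s :=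
            lintegral_mono hinner
        _ = ∫⁻ s in I, ENNReal.ofReal |g s| * ENNReal.ofReal (δ ^ α / α) :=
            lintegral_indicator hImeas _
        _ = (∫⁻ s in I, ENNReal.ofReal |g s|) * ENNReal.ofReal (δ ^ α / α) :=
            lintegral_mul_const' _ _ ENNReal.ofReal_ne_top
        _ = ENNReal.ofReal N * ENNReal.ofReal (δ ^ α / α) := by rw [hNint]
        _ = ENNReal.ofReal (δ ^ α / α * N) := by
            rw [← ENNReal.ofReal_mul (by rw [hNdef]; positivity), mul_comm]
    -- final algebra
    have halg : r ^ p / (Real.Gamma α * r / 2) * (δ ^ α / α * N) =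
        ((2 / (α ^ (1 - α) * Real.Gamma α)) * N) ^ p := by
      have e1 : δ ^ α = X ^ p / X := by
        rw [hδdef, ← Real.rpow_mul hX0.le, show p * α = p - 1 by rw [hpdef]; field_simp; ring,
          Real.rpow_sub hX0, Real.rpow_one]
      have hαpow : (0:ℝ) < α ^ (1 - α) := Real.rpow_pos_of_pos hα _
      have e2 : (2 / (α ^ (1 - α) * Real.Gamma α)) * N = X * r * α ^ (α - 1) := by
        rw [show α - 1 = -(1 - α) by ring, Real.rpow_neg hα.le, hXdef]
        field_simp
      have e3 : (X * r * α ^ (α - 1)) ^ p = X ^ p * r ^ p * α⁻¹ := by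
        rw [Real.mul_rpow (by positivity) (by positivity),
          Real.mul_rpow hX0.le hr.le, ← Real.rpow_mul hα.le,
          show (α - 1) * p = -1 by rw [hpdef]; field_simp; ring, Real.rpow_neg_one]
      rw [e1, e2, e3]
      have hXp : (0:ℝ) < X ^ p := Real.rpow_pos_of_pos hX0 _
      rw [hXdef]
      field_simp
      ring
      rw [mul_comm N, mul_assoc, mul_inv_cancel₀ (hN.ne' : N ≠ 0), mul_one]
    have hc : (0:ℝ) < Real.Gamma α * r / 2 := by positivity
    calc ENNReal.ofReal (r ^ p) * volume S
        = ENNReal.ofReal (r ^ p / (Real.Gamma α * r / 2)) *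
          (ENNReal.ofReal (Real.Gamma α * r / 2) * volume S) := by
          rw [← mul_assoc, ← ENNReal.ofReal_mul (by positivity)]
          rw [div_mul_cancel₀]
          exact ne_of_gt hc
      _ ≤ ENNReal.ofReal (r ^ p / (Real.Gamma α * r / 2)) * ENNReal.ofReal (δ ^ α / α * N) :=
          mul_le_mul_right (le_trans key1 key2) _
      _ = ENNReal.ofReal (((2 / (α ^ (1 - α) * Real.Gamma α)) * N) ^ p) := by
          rw [← ENNReal.ofReal_mul (by positivity), halg]
      _ = _ := by rw [hNdef]
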